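/- Let X be a simplicial space such that the Segal maps p_2 and p_3 are homotopy equivalences, and let r be any homotopy inverse of p_3. Then id_{X_1} × d_1^2 is homotopic to p_2 ∘ d_2^3 ∘ r ∘ (id_{X_1} × p_2) as continuous maps X_1 × X_2 → X_1 × X_1. -/

import Mathlib

open CategoryTheory

/-- The `n`-th space of a simplicial space `X : SimplexCategoryᵒᵖ ⥤ TopCat`. -/
abbrev sp (X : SimplexCategoryᵒᵖ ⥤ TopCat) (n : ℕ) : TopCat :=
  X.obj (Opposite.op (SimplexCategory.mk n))

/-- The face map `d_i^{n+1} : X_{n+1} → X_n` induced by the coface `δ_i^{n+1} : [n] → [n+1]`. -/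
def face (X : SimplexCategoryᵒᵖ ⥤ TopCat) {n : ℕ} (i : Fin (n + 2)) :
    C(sp X (n + 1), sp X n) :=
  (X.map (SimplexCategory.δ i).op).hom

/-- The degeneracy map `s_i^{n+1} : X_n → X_{n+1}` induced by the codegeneracy
`σ_i^{n+1} : [n+1] → [n]`. -/
def degen (X : SimplexCategoryᵒᵖ ⥤ TopCat) {n : ℕ} (i : Fin (n + 1)) :
    C(sp X n, sp X (n + 1)) :=
  (X.map (SimplexCategory.σ i).op).hom

/-- The edge map `X(i_{j+1}) : X_m → X_1` induced by the monotone map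
`ε_{j+1} : [1] → [m]` with `0 ↦ j`, `1 ↦ j+1`. -/
def edge (X : SimplexCategoryᵒᵖ ⥤ TopCat) {m : ℕ} (j : Fin m) :
    C(sp X m, sp X 1) :=
  (X.map (SimplexCategory.mkOfSucc j).op).hom

/-- The `m`-th Segal map `p_m : X_m → (X_1)^m`; for `m = 0` this is the unique map
to the one-point space. -/
def segalPi (X : SimplexCategoryᵒᵖ ⥤ TopCat) (m : ℕ) :
    C(sp X m, Fin m → sp X 1) :=
  ⟨fun x j => edge X j x, continuous_pi fun j => (edge X j).continuous⟩

/-- The second Segal map `p_2 = ⟨X(i_1), X(i_2)⟩ : X_2 → X_1 × X_1`. -/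
def segal2 (X : SimplexCategoryᵒᵖ ⥤ TopCat) : C(sp X 2, sp X 1 × sp X 1) :=
  ⟨fun x => (edge X 0 x, edge X 1 x), by fun_prop⟩

/-- The third Segal map `p_3 = ⟨X(i_1), X(i_2), X(i_3)⟩ : X_3 → X_1 × X_1 × X_1`. -/
def segal3 (X : SimplexCategoryᵒᵖ ⥤ TopCat) : C(sp X 3, sp X 1 × sp X 1 × sp X 1) :=
  ⟨fun x => (edge X 0 x, edge X 1 x, edge X 2 x), by fun_prop⟩

/-- `g` is a homotopy inverse of `f`. -/
def IsHomotopyInverse {A B : Type*} [TopologicalSpace A] [TopologicalSpace B]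
    (f : C(A, B)) (g : C(B, A)) : Prop :=
  (f.comp g).Homotopic (ContinuousMap.id B) ∧ (g.comp f).Homotopic (ContinuousMap.id A)

/-- The continuous map `f` is a homotopy equivalence. -/
def IsHomotopyEquiv {A B : Type*} [TopologicalSpace A] [TopologicalSpace B]
    (f : C(A, B)) : Prop :=
  ∃ g : C(B, A), IsHomotopyInverse f g


section Aux

open ContinuousMap

/-- Homotopy cancellation: if `q ∘ p ≃ id` and `p ∘ f ≃ p ∘ g`, then `f ≃ g`. -/
lemma homotopic_cancel {A B C : Type*} [TopologicalSpace A] [TopologicalSpace B]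
    [TopologicalSpace C] {p : C(B, C)} {q : C(C, B)}
    (hq : (q.comp p).Homotopic (ContinuousMap.id B)) {f g : C(A, B)}
    (h : (p.comp f).Homotopic (p.comp g)) : f.Homotopic g := by
  have h1 : ((q.comp p).comp f).Homotopic ((q.comp p).comp g) := by
    rw [ContinuousMap.comp_assoc, ContinuousMap.comp_assoc]
    exact (ContinuousMap.Homotopic.refl q).comp h
  have h2 : ((q.comp p).comp f).Homotopic f := by
    simpa using hq.comp (ContinuousMap.Homotopic.refl f)
  have h3 : ((q.comp p).comp g).Homotopic g := by
    simpa using hq.comp (ContinuousMap.Homotopic.refl g)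
  exact (h2.symm.trans h1).trans h3

lemma homotopic_prodMk {A B C : Type*} [TopologicalSpace A] [TopologicalSpace B]
    [TopologicalSpace C] {f₀ f₁ : C(A, B)} {g₀ g₁ : C(A, C)}
    (hf : f₀.Homotopic f₁) (hg : g₀.Homotopic g₁) :
    (ContinuousMap.prodMk f₀ g₀).Homotopic (ContinuousMap.prodMk f₁ g₁) := by
  obtain ⟨F⟩ := hf; obtain ⟨G⟩ := hg
  exact ⟨F.prod G⟩

lemma map_map_eq (X : SimplexCategoryᵒᵖ ⥤ TopCat) {a b c : SimplexCategory}
    (f : a ⟶ b) (g : b ⟶ c) (x : X.obj (Opposite.op c)) :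
    X.map f.op (X.map g.op x) = X.map (f ≫ g).op x := by
  rw [CategoryTheory.op_comp, X.map_comp]; rfl

open SimplexCategory in
lemma simplex_id1 : (mkOfSucc 0 : mk 1 ⟶ mk 2) ≫ δ 2 = mkOfSucc 0 := by
  ext i : 3; fin_cases i <;> rfl

open SimplexCategory in
lemma simplex_id2 : (mkOfSucc 1 : mk 1 ⟶ mk 2) ≫ δ 2 = δ 1 ≫ δ 0 := by
  ext i : 3; fin_cases i <;> rfl

open SimplexCategory in
lemma simplex_id3 : (mkOfSucc 0 : mk 1 ⟶ mk 2) ≫ δ 0 = mkOfSucc 1 := by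
  ext i : 3; fin_cases i <;> rfl

open SimplexCategory in
lemma simplex_id4 : (mkOfSucc 1 : mk 1 ⟶ mk 2) ≫ δ 0 = mkOfSucc 2 := by
  ext i : 3; fin_cases i <;> rfl

end Aux

/-- If `p_2` and `p_3` are homotopy equivalences and `r` is any homotopy inverse of `p_3`,
then `id × d_1^2` is homotopic to `p_2 ∘ d_2^3 ∘ r ∘ (id × p_2)` as maps
`X_1 × X_2 → X_1 × X_1`. -/
theorem id_times_face_one_homotopic (X : SimplexCategoryᵒᵖ ⥤ TopCat)
    (h2 : IsHomotopyEquiv (segal2 X)) (h3 : IsHomotopyEquiv (segal3 X))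
    (r : C(sp X 1 × sp X 1 × sp X 1, sp X 3)) (hr : IsHomotopyInverse (segal3 X) r) :
    ((ContinuousMap.id (sp X 1)).prodMap (face X (1 : Fin 3))).Homotopic
      ((segal2 X).comp ((face X (2 : Fin 4)).comp
        (r.comp ((ContinuousMap.id (sp X 1)).prodMap (segal2 X))))) := by
  classical
  obtain ⟨q, hq1, hq2⟩ := h2
  set F : C(sp X 1 × sp X 2, sp X 1 × (sp X 1 × sp X 1)) :=
    (ContinuousMap.id (sp X 1)).prodMap (segal2 X) with hF
  set w : C(sp X 1 × sp X 2, sp X 3) := r.comp F with hw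
  -- the big homotopy: p₃ ∘ r ∘ F ≃ F
  have Hbig : (((segal3 X).comp r).comp F).Homotopic
      ((ContinuousMap.id _).comp F) :=
    hr.1.comp (ContinuousMap.Homotopic.refl F)
  -- first component
  have H1 : ((edge X (0 : Fin 3)).comp w).Homotopic
      (ContinuousMap.fst : C(sp X 1 × sp X 2, sp X 1)) := by
    have := (ContinuousMap.Homotopic.refl
      (ContinuousMap.fst : C(sp X 1 × (sp X 1 × sp X 1), sp X 1))).comp Hbig
    have e1 : (ContinuousMap.fst : C(sp X 1 × (sp X 1 × sp X 1), sp X 1)).comp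
        (((segal3 X).comp r).comp F) = (edge X (0 : Fin 3)).comp w := by
      ext x; rfl
    have e2 : (ContinuousMap.fst : C(sp X 1 × (sp X 1 × sp X 1), sp X 1)).comp
        ((ContinuousMap.id _).comp F) = ContinuousMap.fst := by
      ext x; rfl
    rwa [e1, e2] at this
  -- second pair of components
  have H2 : ((segal2 X).comp ((face X (0 : Fin 4)).comp w)).Homotopic
      ((segal2 X).comp (ContinuousMap.snd : C(sp X 1 × sp X 2, sp X 2))) := by
    have := (ContinuousMap.Homotopic.refl
      (ContinuousMap.snd : C(sp X 1 × (sp X 1 × sp X 1), sp X 1 × sp X 1))).comp Hbig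
    have e1 : (ContinuousMap.snd : C(sp X 1 × (sp X 1 × sp X 1), sp X 1 × sp X 1)).comp
        (((segal3 X).comp r).comp F) = (segal2 X).comp ((face X (0 : Fin 4)).comp w) := by
      ext x
      · show edge X (1 : Fin 3) (w x) = edge X (0 : Fin 2) (face X (0 : Fin 4) (w x))
        rw [show edge X (0 : Fin 2) (face X (0 : Fin 4) (w x))
            = X.map ((SimplexCategory.mkOfSucc 0 : SimplexCategory.mk 1 ⟶ SimplexCategory.mk 2)
              ≫ SimplexCategory.δ 0).op (w x) from map_map_eq X (SimplexCategory.mkOfSucc 0) (SimplexCategory.δ 0) (w x), simplex_id3]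
        rfl
      · show edge X (2 : Fin 3) (w x) = edge X (1 : Fin 2) (face X (0 : Fin 4) (w x))
        rw [show edge X (1 : Fin 2) (face X (0 : Fin 4) (w x))
            = X.map ((SimplexCategory.mkOfSucc 1 : SimplexCategory.mk 1 ⟶ SimplexCategory.mk 2)
              ≫ SimplexCategory.δ 0).op (w x) from map_map_eq X (SimplexCategory.mkOfSucc 1) (SimplexCategory.δ 0) (w x), simplex_id4]
        rfl
    have e2 : (ContinuousMap.snd : C(sp X 1 × (sp X 1 × sp X 1), sp X 1 × sp X 1)).comp
        ((ContinuousMap.id _).comp F) = (segal2 X).comp ContinuousMap.snd := by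
      ext x <;> rfl
    rwa [e1, e2] at this
  -- cancel p₂
  have H3 : ((face X (0 : Fin 4)).comp w).Homotopic
      (ContinuousMap.snd : C(sp X 1 × sp X 2, sp X 2)) :=
    homotopic_cancel hq2 H2
  -- compose with d₁²
  have H4 : ((face X (1 : Fin 3)).comp ((face X (0 : Fin 4)).comp w)).Homotopic
      ((face X (1 : Fin 3)).comp ContinuousMap.snd) :=
    (ContinuousMap.Homotopic.refl (face X (1 : Fin 3))).comp H3
  -- identify both sides as prodMk's
  have eL : (ContinuousMap.id (sp X 1)).prodMap (face X (1 : Fin 3))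
      = ContinuousMap.prodMk (ContinuousMap.fst : C(sp X 1 × sp X 2, sp X 1))
        ((face X (1 : Fin 3)).comp ContinuousMap.snd) := by
    ext x <;> rfl
  have eR : (segal2 X).comp ((face X (2 : Fin 4)).comp
        (r.comp ((ContinuousMap.id (sp X 1)).prodMap (segal2 X))))
      = ContinuousMap.prodMk ((edge X (0 : Fin 3)).comp w)
        ((face X (1 : Fin 3)).comp ((face X (0 : Fin 4)).comp w)) := by
    ext x
    · show edge X (0 : Fin 2) (face X (2 : Fin 4) (w x)) = edge X (0 : Fin 3) (w x)
      rw [show edge X (0 : Fin 2) (face X (2 : Fin 4) (w x))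
          = X.map ((SimplexCategory.mkOfSucc 0 : SimplexCategory.mk 1 ⟶ SimplexCategory.mk 2)
            ≫ SimplexCategory.δ 2).op (w x) from map_map_eq X (SimplexCategory.mkOfSucc 0) (SimplexCategory.δ 2) (w x), simplex_id1]
      rfl
    · show edge X (1 : Fin 2) (face X (2 : Fin 4) (w x))
        = face X (1 : Fin 3) (face X (0 : Fin 4) (w x))
      rw [show edge X (1 : Fin 2) (face X (2 : Fin 4) (w x))
          = X.map ((SimplexCategory.mkOfSucc 1 : SimplexCategory.mk 1 ⟶ SimplexCategory.mk 2)
            ≫ SimplexCategory.δ 2).op (w x) from map_map_eq X (SimplexCategory.mkOfSucc 1) (SimplexCategory.δ 2) (w x), simplex_id2]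
      exact (map_map_eq X _ _ _).symm
  rw [eL, eR]
  exact homotopic_prodMk H1.symm H4.symm
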